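/- In the IC-type deterministic growth model (new vertices only attach to vertices added at the previous step), if the Jordan center moves from step t to step t+1, then all subtrees of G_t rooted at neighbors of the Jordan center v*_t, except the unique deepest one, are dead at step t, i.e., they receive no new vertices at step t+1 (and hence at any later step). -/

import Mathlib

/-- Depth (max distance from `v`) of the subtree hanging off `v` at its neighbor `w`,
within the subtree with vertex set `A` of an ambient tree `T`. -/
noncomputable def subDepthIn {V : Type*} (T : SimpleGraph V) (A : Finset V)
    (v w : V) : ℕ :=
  (A.filter (fun x => T.dist v x = T.dist w x + 1)).sup (fun x => T.dist v x)

namespace StmtNineAux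

open SimpleGraph

variable {V : Type*} {T : SimpleGraph V}

lemma path_length_eq (hT : T.IsTree) {x y : V} {p : T.Walk x y} (hp : p.IsPath) :
    p.length = T.dist x y := by
  obtain ⟨q, hq, hql⟩ := hT.isConnected.exists_path_of_dist x y
  have huniq := (hT.existsUnique_path x y).unique hp hq
  rw [huniq, hql]

lemma dist_add_of_mem (hT : T.IsTree) {x y z : V} {p : T.Walk x y} (hp : p.IsPath)
    (hz : z ∈ p.support) : T.dist x z + T.dist z y = T.dist x y := by
  classical
  have h1 := path_length_eq hT (hp.takeUntil hz)
  have h2 := path_length_eq hT (hp.dropUntil hz)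
  have h3 := congrArg Walk.length (p.take_spec hz)
  rw [Walk.length_append] at h3
  have h4 := path_length_eq hT hp
  omega

lemma exists_adj_dist (hT : T.IsTree) {x y : V} (hxy : x ≠ y) :
    ∃ w, T.Adj x w ∧ T.dist x y = T.dist w y + 1 := by
  obtain ⟨p, hp, hl⟩ := hT.isConnected.exists_path_of_dist x y
  cases p with
  | nil => exact absurd rfl hxy
  | @cons _ w _ h q =>
    refine ⟨w, h, ?_⟩
    have hq : q.IsPath := hp.of_cons
    have h2 := path_length_eq hT hq
    rw [Walk.length_cons] at hl
    omega

lemma adj_dist_cases (hT : T.IsTree) {x y : V} (hxy : T.Adj x y) (z : V) :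
    T.dist z x = T.dist z y + 1 ∨ T.dist z y = T.dist z x + 1 := by
  obtain ⟨p, hp, hl⟩ := hT.isConnected.exists_path_of_dist z x
  by_cases hy : y ∈ p.support
  · left
    have h1 := dist_add_of_mem hT hp hy
    have h2 : T.dist y x = 1 := dist_eq_one_iff_adj.mpr hxy.symm
    omega
  · right
    have hrev : (Walk.cons hxy.symm p.reverse).IsPath := by
      rw [Walk.cons_isPath_iff]
      refine ⟨hp.reverse, ?_⟩
      rw [Walk.support_reverse, List.mem_reverse]
      exact hy
    have h2 := path_length_eq hT hrev.reverse
    rw [Walk.length_reverse, Walk.length_cons, Walk.length_reverse] at h2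
    omega

lemma between (hT : T.IsTree) {v w x y : V} (hvw : T.Adj v w)
    (hx : T.dist v x = T.dist w x + 1) (hy : T.dist w y = T.dist v y + 1) :
    T.dist x y = T.dist x v + T.dist v y := by
  obtain ⟨r, hr, hrl⟩ := hT.isConnected.exists_path_of_dist w x
  obtain ⟨q, hq, hql⟩ := hT.isConnected.exists_path_of_dist v y
  have hconn := hT.isConnected
  have hdvw : T.dist v w = 1 := dist_eq_one_iff_adj.mpr hvw
  have hvr : v ∉ r.support := by
    intro hmem
    have h1 := dist_add_of_mem hT hr hmem
    have h2 : T.dist w v = T.dist v w := T.dist_comm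
    omega
  have hp : (Walk.cons hvw r).IsPath := hr.cons hvr
  have hdisj : ∀ z ∈ r.support, z ∉ q.support := by
    intro z hzr hzq
    have h1 : T.dist w z + T.dist z x = T.dist w x := dist_add_of_mem hT hr hzr
    have h2 : T.dist v z + T.dist z y = T.dist v y := dist_add_of_mem hT hq hzq
    have h3 : T.dist v z ≤ T.dist v w + T.dist w z := hconn.dist_triangle
    have h4 : T.dist v x ≤ T.dist v z + T.dist z x := hconn.dist_triangle
    have h5 : T.dist w y ≤ T.dist w z + T.dist z y := hconn.dist_triangle
    omega
  have hWpath : ((Walk.cons hvw r).reverse.append q).IsPath := by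
    rw [Walk.isPath_def, Walk.support_append, List.nodup_append]
    refine ⟨by rw [Walk.support_reverse]; exact List.nodup_reverse.2 hp.support_nodup, ?_, ?_⟩
    · have hnd := hq.support_nodup
      rw [q.support_eq_cons] at hnd
      exact hnd.of_cons
    · intro a ha b hatail hab
      subst hab
      rw [Walk.support_reverse, List.mem_reverse, Walk.support_cons] at ha
      have haq : a ∈ q.support := List.mem_of_mem_tail hatail
      rcases List.mem_cons.1 ha with rfl | har
      · have hnd := hq.support_nodup
        rw [q.support_eq_cons] at hnd
        exact (List.nodup_cons.1 hnd).1 hatail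
      · exact hdisj a har haq
  have hlen := path_length_eq hT hWpath
  rw [Walk.length_append, Walk.length_reverse, Walk.length_cons] at hlen
  have hcomm : T.dist x v = T.dist v x := T.dist_comm
  omega

end StmtNineAux

open StmtNineAux in
/-- IC-type deterministic growth (vertex sets `S t` of subtrees of an ambient tree `T`,
starting from `{u}`, new vertices attaching only to vertices added at the previous step).
Let `v` be a Jordan center of `G_t`, with unique deepest neighbor subtree at `u1`.
If the Jordan center moves from step `t` to step `t+1`, then every subtree rooted at a
neighbor `w ≠ u1` of `v` is dead at step `t`: it receives no new vertices at step `t+1`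
nor at any later step. -/
theorem stmt9 {V : Type*} (T : SimpleGraph V) (hT : T.IsTree)
    (u : V) (S : ℕ → Finset V)
    (h0 : S 0 = {u})
    (hmono : ∀ s, S s ⊆ S (s + 1))
    (hconv : ∀ s, ∀ a b c : V, a ∈ S s → c ∈ S s →
      T.dist a b + T.dist b c = T.dist a c → b ∈ S s)
    (h1 : ∀ x : V, x ∈ S 1 → x ∉ S 0 → T.Adj u x)
    (hstep : ∀ s, ∀ x : V, x ∈ S (s + 2) → x ∉ S (s + 1) →
      ∃ y : V, y ∈ S (s + 1) ∧ y ∉ S s ∧ T.Adj x y)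
    (t : ℕ) (v u1 : V) (hv : v ∈ S t) (hu1 : u1 ∈ S t) (hadj1 : T.Adj v u1)
    (hmin : ∀ w ∈ S t, (S t).sup (fun z => T.dist v z) ≤ (S t).sup (fun z => T.dist w z))
    (hdeepest : ∀ w : V, w ∈ S t → T.Adj v w → w ≠ u1 →
      subDepthIn T (S t) v w < subDepthIn T (S t) v u1)
    (hmove : ∃ c ∈ S (t + 1), (S (t + 1)).sup (fun z => T.dist c z) <
      (S (t + 1)).sup (fun z => T.dist v z)) :
    ∀ w : V, T.Adj v w → w ≠ u1 →
      ∀ s, t ≤ s → ∀ x ∈ S (s + 1), T.dist v x = T.dist w x + 1 → x ∈ S t := by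
  have hconn := hT.isConnected
  have hu0 : u ∈ S 0 := by rw [h0]; exact Finset.mem_singleton_self u
  have hmonole : ∀ {a b : ℕ}, a ≤ b → S a ⊆ S b := by
    intro a b hab
    induction hab with
    | refl => exact fun _ h => h
    | step _ ih => exact fun x hx => hmono _ (ih hx)
  -- distance-from-root structure
  have hG : ∀ s : ℕ, (∀ x ∈ S s, T.dist u x ≤ s) ∧
      (∀ x ∈ S (s + 1), x ∉ S s → T.dist u x = s + 1) := by
    intro s
    induction s with
    | zero =>
      constructor
      · intro x hx
        rw [h0, Finset.mem_singleton] at hx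
        subst hx
        simp [SimpleGraph.dist_self]
      · intro x hx hnx
        exact SimpleGraph.dist_eq_one_iff_adj.mpr (h1 x hx hnx)
    | succ n ih =>
      have hfst : ∀ x ∈ S (n + 1), T.dist u x ≤ n + 1 := by
        intro x hx
        by_cases h : x ∈ S n
        · exact (ih.1 x h).trans (Nat.le_succ n)
        · exact (ih.2 x hx h).le
      refine ⟨hfst, ?_⟩
      intro x hx hnx
      obtain ⟨y, hy1, hy2, hxy⟩ := hstep n x hx hnx
      have hdy : T.dist u y = n + 1 := ih.2 y hy1 hy2
      rcases adj_dist_cases hT hxy u with h | h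
      · omega
      · exfalso
        have hd1 : T.dist x y = 1 := SimpleGraph.dist_eq_one_iff_adj.mpr hxy
        exact hnx (hconv (n + 1) u x y (hmonole (Nat.zero_le _) hu0) hy1 (by omega))
  have hG2 : ∀ s, ∀ x ∈ S (s + 1), T.dist u x ≤ s → x ∈ S s := by
    intro s x hx hd
    by_contra h
    have := (hG s).2 x hx h
    omega
  have hparent : ∀ s, ∀ x ∈ S (s + 1), x ∉ S s →
      ∃ y, T.Adj x y ∧ y ∈ S s ∧ T.dist u x = T.dist u y + 1 := by
    intro s x hx hnx
    have hdx : T.dist u x = s + 1 := (hG s).2 x hx hnx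
    have hne : x ≠ u := by
      rintro rfl
      simp [SimpleGraph.dist_self] at hdx
    obtain ⟨y, hadj, hdy⟩ := exists_adj_dist hT hne
    have hc1 : T.dist x u = T.dist u x := T.dist_comm
    have hc2 : T.dist y u = T.dist u y := T.dist_comm
    have hdyx : T.dist y x = 1 := SimpleGraph.dist_eq_one_iff_adj.mpr hadj.symm
    have hy1 : y ∈ S (s + 1) :=
      hconv (s + 1) u y x (hmonole (Nat.zero_le _) hu0) hx (by omega)
    exact ⟨y, hadj, hG2 s y hy1 (by omega), by omega⟩
  -- eccentricity of v in S t
  set e := (S t).sup (fun z => T.dist v z) with he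
  have hSne : (S t).Nonempty := ⟨v, hv⟩
  have hdvu1 : T.dist v u1 = 1 := SimpleGraph.dist_eq_one_iff_adj.mpr hadj1
  have he1 : 1 ≤ e := by
    have hle : T.dist v u1 ≤ e := Finset.le_sup hu1
    omega
  have hsubu1_le : subDepthIn T (S t) v u1 ≤ e := by
    refine Finset.sup_le fun x hx => ?_
    exact Finset.le_sup (f := fun z => T.dist v z) (Finset.mem_filter.mp hx).1
  -- deepest vertex z1
  obtain ⟨z1, hz1mem, hz1⟩ := Finset.exists_mem_eq_sup (S t) hSne (fun z => T.dist v z)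
  rw [← he] at hz1
  have hz1v : z1 ≠ v := by
    rintro rfl
    rw [SimpleGraph.dist_self] at hz1
    omega
  obtain ⟨w1, hw1adj, hw1d⟩ := exists_adj_dist hT (Ne.symm hz1v)
  have hw1mem : w1 ∈ S t := by
    refine hconv t v w1 z1 hv hz1mem ?_
    have : T.dist v w1 = 1 := SimpleGraph.dist_eq_one_iff_adj.mpr hw1adj
    omega
  have hz1side : T.dist v z1 = T.dist u1 z1 + 1 := by
    by_cases hne : w1 = u1
    · exact hne ▸ hw1d
    · exfalso
      have h5 := hdeepest w1 hw1mem hw1adj hne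
      have h6 : T.dist v z1 ≤ subDepthIn T (S t) v w1 :=
        Finset.le_sup (f := fun x => T.dist v x) (Finset.mem_filter.mpr ⟨hz1mem, hw1d⟩)
      omega
  -- bound on depth outside subtree(u1)
  have hside_bound : ∀ x ∈ S t, T.dist u1 x = T.dist v x + 1 → T.dist v x + 1 ≤ e := by
    intro x hx hxs
    rcases eq_or_ne x v with rfl | hne
    · simp [SimpleGraph.dist_self]
      omega
    obtain ⟨w, hwadj, hwd⟩ := exists_adj_dist hT (Ne.symm hne)
    have hwmem : w ∈ S t := by
      refine hconv t v w x hv hx ?_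
      have : T.dist v w = 1 := SimpleGraph.dist_eq_one_iff_adj.mpr hwadj
      omega
    have hwu1 : w ≠ u1 := by rintro rfl; omega
    have h5 := hdeepest w hwmem hwadj hwu1
    have h6 : T.dist v x ≤ subDepthIn T (S t) v w :=
      Finset.le_sup (f := fun x => T.dist v x) (Finset.mem_filter.mpr ⟨hx, hwd⟩)
    omega
  -- second-deepest witness z2
  obtain ⟨z2, hz2mem, hz2sup⟩ := Finset.exists_mem_eq_sup (S t) hSne (fun z => T.dist u1 z)
  have hz2ge : e ≤ T.dist u1 z2 := hz2sup ▸ hmin u1 hu1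
  have hz2side : T.dist u1 z2 = T.dist v z2 + 1 := by
    rcases adj_dist_cases hT hadj1 z2 with h | h
    · exfalso
      have hc1 : T.dist z2 v = T.dist v z2 := T.dist_comm
      have hc2 : T.dist z2 u1 = T.dist u1 z2 := T.dist_comm
      have hle : T.dist v z2 ≤ e := Finset.le_sup (f := fun z => T.dist v z) hz2mem
      omega
    · have hc1 : T.dist z2 v = T.dist v z2 := T.dist_comm
      have hc2 : T.dist z2 u1 = T.dist u1 z2 := T.dist_comm
      omega
  have hz2e : T.dist v z2 + 1 = e :=
    le_antisymm (hside_bound z2 hz2mem hz2side) (by omega)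
  -- eccentricity of v in S (t+1)
  set E := (S (t + 1)).sup (fun z => T.dist v z) with hE
  have hEe : e ≤ E := Finset.sup_mono (hmono t)
  have hEe1 : E ≤ e + 1 := by
    refine Finset.sup_le fun x hx => ?_
    by_cases h : x ∈ S t
    · have : T.dist v x ≤ e := Finset.le_sup (f := fun z => T.dist v z) h
      omega
    · obtain ⟨y, hadj, hymem, _⟩ := hparent t x hx h
      have htri : T.dist v x ≤ T.dist v y + T.dist y x := hconn.dist_triangle
      have h1 : T.dist y x = 1 := SimpleGraph.dist_eq_one_iff_adj.mpr hadj.symm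
      have h2 : T.dist v y ≤ e := Finset.le_sup (f := fun z => T.dist v z) hymem
      omega
  obtain ⟨c, hcmem, hcE⟩ := hmove
  have hcel : (S (t + 1)).sup (fun z => T.dist c z) ≤ e := by omega
  -- c is in the subtree at u1
  have hcsub : T.dist v c = T.dist u1 c + 1 := by
    rcases adj_dist_cases hT hadj1 c with h | h
    · have hc1 : T.dist c v = T.dist v c := T.dist_comm
      have hc2 : T.dist c u1 = T.dist u1 c := T.dist_comm
      omega
    · exfalso
      have hc1 : T.dist c v = T.dist v c := T.dist_comm
      have hc2 : T.dist c u1 = T.dist u1 c := T.dist_comm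
      have h' : T.dist u1 c = T.dist v c + 1 := by omega
      have hb := between hT hadj1 hz1side h'
      have hle : T.dist c z1 ≤ e :=
        le_trans (Finset.le_sup (f := fun z => T.dist c z) (hmono t hz1mem)) hcel
      have hc3 : T.dist z1 c = T.dist c z1 := T.dist_comm
      have hc4 : T.dist z1 v = T.dist v z1 := T.dist_comm
      have hvc0 : T.dist v c = 0 := by omega
      have : v = c := (hconn.dist_eq_zero_iff).1 hvc0
      subst this
      exact absurd hcE (lt_irrefl _)
  have hcu1 : c = u1 := by
    have hb := between hT hadj1 hcsub hz2side
    have hle : T.dist c z2 ≤ e :=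
      le_trans (Finset.le_sup (f := fun z => T.dist c z) (hmono t hz2mem)) hcel
    have hc1 : T.dist c v = T.dist v c := T.dist_comm
    have h0' : T.dist u1 c = 0 := by omega
    exact ((hconn.dist_eq_zero_iff).1 h0').symm
  subst hcu1
  -- so ecc_{t+1}(u1) ≤ e and E = e + 1
  have heccu1 : (S (t + 1)).sup (fun z => T.dist c z) ≤ e := hcel
  have hEeq : E = e + 1 := by
    have h1 : T.dist c z2 ≤ (S (t + 1)).sup (fun z => T.dist c z) :=
      Finset.le_sup (hmono t hz2mem)
    omega
  -- deep new vertex zs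
  obtain ⟨zs, hzsmem, hzs⟩ :=
    Finset.exists_mem_eq_sup (S (t + 1)) ⟨v, hmono t hv⟩ (fun z => T.dist v z)
  rw [← hE, hEeq] at hzs
  have hzsnew : zs ∉ S t := by
    intro h
    have : T.dist v zs ≤ e := Finset.le_sup (f := fun z => T.dist v z) h
    omega
  have hzsside : T.dist v zs = T.dist c zs + 1 := by
    rcases adj_dist_cases hT hadj1 zs with h | h
    · have hc1 : T.dist zs v = T.dist v zs := T.dist_comm
      have hc2 : T.dist zs c = T.dist c zs := T.dist_comm
      omega
    · exfalso
      have hc1 : T.dist zs v = T.dist v zs := T.dist_comm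
      have hc2 : T.dist zs c = T.dist c zs := T.dist_comm
      have hle : T.dist c zs ≤ e :=
        le_trans (Finset.le_sup (f := fun z => T.dist c z) hzsmem) hcel
      omega
  have hzsu : T.dist u zs = t + 1 := (hG t).2 zs hzsmem hzsnew
  -- base case: no new vertex at step t+1 in a non-c subtree
  have base : ∀ w : V, T.Adj v w → w ≠ c →
      ∀ x ∈ S (t + 1), T.dist v x = T.dist w x + 1 → x ∈ S t := by
    intro w hw hwne x hx hxsub
    by_contra hxnew
    -- x is not in subtree(c)
    have hx0nsub : T.dist c x = T.dist v x + 1 := by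
      rcases adj_dist_cases hT hadj1 x with h | h
      · exfalso
        have hc1 : T.dist x v = T.dist v x := T.dist_comm
        have hc2 : T.dist x c = T.dist c x := T.dist_comm
        have h' : T.dist v x = T.dist c x + 1 := by omega
        have hwu1d : T.dist c w = T.dist v w + 1 := by
          rcases adj_dist_cases hT hadj1 w with hh | hh
          · exfalso
            have hd1 : T.dist v w = 1 := SimpleGraph.dist_eq_one_iff_adj.mpr hw
            have hc3 : T.dist w v = T.dist v w := T.dist_comm
            have hc4 : T.dist w c = T.dist c w := T.dist_comm
            have h0' : T.dist c w = 0 := by omega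
            exact hwne (((hconn.dist_eq_zero_iff).1 h0').symm ▸ rfl)
          · have hc3 : T.dist w v = T.dist v w := T.dist_comm
            have hc4 : T.dist w c = T.dist c w := T.dist_comm
            omega
        have hb := between hT hadj1 h' hwu1d
        have hd1 : T.dist v w = 1 := SimpleGraph.dist_eq_one_iff_adj.mpr hw
        have hc5 : T.dist x w = T.dist w x := T.dist_comm
        have hc6 : T.dist x v = T.dist v x := T.dist_comm
        omega
      · have hc1 : T.dist x v = T.dist v x := T.dist_comm
        have hc2 : T.dist x c = T.dist c x := T.dist_comm
        omega
    have hx0e : T.dist v x + 1 ≤ e := by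
      have : T.dist c x ≤ e :=
        le_trans (Finset.le_sup (f := fun z => T.dist c z) hx) hcel
      omega
    obtain ⟨y0, hy0adj, hy0mem, hy0d⟩ := hparent t x hx hxnew
    have hxt : T.dist u x = t + 1 := (hG t).2 x hx hxnew
    have hy0t : T.dist u y0 = t := by omega
    have hy0v : T.dist v x = T.dist v y0 + 1 := by
      rcases adj_dist_cases hT hy0adj v with h | h
      · exact h
      · exfalso
        have hd1 : T.dist x y0 = 1 := SimpleGraph.dist_eq_one_iff_adj.mpr hy0adj
        exact hxnew (hconv t v x y0 hv hy0mem (by omega))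
    rcases adj_dist_cases hT hadj1 u with hcaseA | hcaseB
    · -- u in subtree(c)
      have hA : T.dist v u = T.dist c u + 1 := by
        have hc1 : T.dist u v = T.dist v u := T.dist_comm
        have hc2 : T.dist u c = T.dist c u := T.dist_comm
        omega
      have hb1 := between hT hadj1 hA hx0nsub
      have hb2 := between hT hadj1 hA hz2side
      have hz2t : T.dist u z2 ≤ t := (hG t).1 z2 hz2mem
      have hc1 : T.dist u v = T.dist v u := T.dist_comm
      omega
    · -- u not in subtree(c)
      have hB : T.dist c u = T.dist v u + 1 := by
        have hc2 : T.dist u c = T.dist c u := T.dist_comm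
        have hc1 : T.dist u v = T.dist v u := T.dist_comm
        omega
      have hb := between hT hadj1 hzsside hB
      have htri : T.dist u y0 ≤ T.dist u v + T.dist v y0 := hconn.dist_triangle
      have hc1 : T.dist u v = T.dist v u := T.dist_comm
      have hc2 : T.dist zs u = T.dist u zs := T.dist_comm
      have hc3 : T.dist zs v = T.dist v zs := T.dist_comm
      omega
  -- induction wrapper: subtrees stay dead forever
  intro w hw hwne s hts x hx hxsub
  obtain ⟨k, rfl⟩ := Nat.exists_eq_add_of_le hts
  have main : ∀ k' : ℕ, ∀ x : V, x ∈ S (t + k' + 1) → T.dist v x = T.dist w x + 1 →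
      x ∈ S t := by
    intro k'
    induction k' with
    | zero => exact fun x hx hxs => base w hw hwne x hx hxs
    | succ n ih =>
      intro x hx hxs
      by_cases hx' : x ∈ S (t + n + 1)
      · exact ih x hx' hxs
      · exfalso
        have hx'' : x ∈ S (t + n + 1 + 1) := by
          have : t + (n + 1) + 1 = t + n + 1 + 1 := by omega
          rwa [this] at hx
        obtain ⟨y, hy1, hy2, hxy⟩ := hstep (t + n) x hx'' hx'
        have hyv : y ≠ v := fun h => hy2 (h ▸ hmonole (Nat.le_add_right t n) hv)
        have hxv : x ≠ v := fun h => hx' (h ▸ hmonole (by omega) hv)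
        have hysub : T.dist v y = T.dist w y + 1 := by
          rcases adj_dist_cases hT hw y with h | h
          · have hc1 : T.dist y v = T.dist v y := T.dist_comm
            have hc2 : T.dist y w = T.dist w y := T.dist_comm
            omega
          · exfalso
            have h' : T.dist w y = T.dist v y + 1 := by
              have hc1 : T.dist y v = T.dist v y := T.dist_comm
              have hc2 : T.dist y w = T.dist w y := T.dist_comm
              omega
            have hb := between hT hw hxs h'
            have h1 : T.dist x y = 1 := SimpleGraph.dist_eq_one_iff_adj.mpr hxy
            have h2 : 0 < T.dist v x := hconn.pos_dist_of_ne (Ne.symm hxv)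
            have hc3 : T.dist x v = T.dist v x := T.dist_comm
            have h0' : T.dist v y = 0 := by omega
            exact hyv ((hconn.dist_eq_zero_iff).1 h0').symm
        exact hy2 (hmonole (Nat.le_add_right t n) (ih y hy1 hysub))
  exact main k x hx hxsub
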